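/- For a Dirichlet-distributed vector X ~ Dir(α) and nonnegative integers k₁,…,k_N, the mixed moment satisfies E[∏ᵢ Xᵢ^{kᵢ}] = (Γ(‖α‖₁) / Γ(‖α‖₁ + ‖k‖₁)) ∏ᵢ Γ(αᵢ + kᵢ)/Γ(αᵢ). -/

import Mathlib

open MeasureTheory Real
open scoped ENNReal NNReal

noncomputable section

/-- Parametrization of the standard simplex in `ℝ^{N}` (`N = n+1`) by its first `n`
coordinates: the last coordinate is `1 - Σᵢ yᵢ`. -/
def simplexEmbed (n : ℕ) (y : Fin n → ℝ) : Fin (n + 1) → ℝ :=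
  fun i => if h : (i : ℕ) < n then y ⟨i, h⟩ else 1 - ∑ j, y j

/-- The density of the Dirichlet distribution `Dir(α)` with respect to Lebesgue
measure on `ℝ^n` (the simplex being parametrized by its first `n` coordinates):
`f(x) = (Γ(‖α‖₁) / ∏ᵢ Γ(αᵢ)) ∏ᵢ xᵢ^(αᵢ−1)` on the simplex, and `0` outside. -/
def dirichletDensity {n : ℕ} (α : Fin (n + 1) → ℝ) (y : Fin n → ℝ) : ℝ :=
  if ∀ i, 0 ≤ simplexEmbed n y i then
    (Real.Gamma (∑ i, α i) / ∏ i, Real.Gamma (α i)) *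
      ∏ i, (simplexEmbed n y i) ^ (α i - 1)
  else 0

/-- The Dirichlet distribution `Dir(α)` as a measure on `Fin (n+1) → ℝ`, supported
on the standard simplex `{x : xᵢ ≥ 0, Σ xᵢ = 1}`. -/
def dirichlet {n : ℕ} (α : Fin (n + 1) → ℝ) : Measure (Fin (n + 1) → ℝ) :=
  Measure.map (simplexEmbed n)
    ((volume : Measure (Fin n → ℝ)).withDensity
      (fun y => ENNReal.ofReal (dirichletDensity α y)))


lemma scaled_beta {u v s : ℝ} (hu : 0 < u) (hv : 0 < v) (hs : 0 < s) :
    ∫ t in (0:ℝ)..s, t ^ (u - 1) * (s - t) ^ (v - 1)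
      = s ^ (u + v - 1) * (Gamma u * Gamma v / Gamma (u + v)) := by
  have key := Complex.betaIntegral_scaled (u : ℂ) (v : ℂ) hs
  have hbeta : Complex.betaIntegral u v = ↑(Gamma u * Gamma v / Gamma (u + v)) := by
    have h := Complex.Gamma_mul_Gamma_eq_betaIntegral
      (s := (u:ℂ)) (t := (v:ℂ)) (by simpa using hu) (by simpa using hv)
    have hne : Complex.Gamma ((u:ℂ) + v) ≠ 0 := by
      rw [← Complex.ofReal_add, Complex.Gamma_ofReal]
      exact_mod_cast (Real.Gamma_pos_of_pos (by linarith)).ne'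
    have hne' : (↑(Gamma (u + v)) : ℂ) ≠ 0 := by
      exact_mod_cast (Real.Gamma_pos_of_pos (by linarith : (0:ℝ) < u + v)).ne'
    push_cast
    rw [eq_div_iff hne', ← Complex.Gamma_ofReal, ← Complex.Gamma_ofReal,
      ← Complex.Gamma_ofReal]
    push_cast
    linear_combination -h
  rw [hbeta] at key
  have hL : (∫ x in (0:ℝ)..s, (x : ℂ) ^ ((u:ℂ) - 1) * ((s : ℂ) - x) ^ ((v:ℂ) - 1))
      = ↑(∫ t in (0:ℝ)..s, t ^ (u - 1) * (s - t) ^ (v - 1)) := by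
    rw [← intervalIntegral.integral_ofReal]
    apply intervalIntegral.integral_congr
    intro x hx
    dsimp only
    rw [Set.uIcc_of_le hs.le] at hx
    obtain ⟨hx0, hxs⟩ := hx
    push_cast
    rw [Complex.ofReal_cpow hx0, Complex.ofReal_cpow (by linarith : (0:ℝ) ≤ s - x)]
    push_cast
    ring
  rw [hL] at key
  have hR : ((s:ℂ)) ^ ((u:ℂ) + v - 1) = ↑(s ^ (u + v - 1)) := by
    rw [Complex.ofReal_cpow hs.le]
    push_cast
    ring
  rw [hR, ← Complex.ofReal_mul] at key
  exact_mod_cast key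

lemma beta_integrable {u v s : ℝ} (hu : 0 < u) (hv : 0 < v) (hs : 0 < s) :
    IntervalIntegrable (fun t => t ^ (u - 1) * (s - t) ^ (v - 1)) volume 0 s := by
  have h1 : IntervalIntegrable (fun t => t ^ (u - 1) * (s - t) ^ (v - 1)) volume 0 (s/2) := by
    apply IntervalIntegrable.mul_continuousOn
    · exact intervalIntegral.intervalIntegrable_rpow' (by linarith)
    · apply ContinuousOn.rpow_const (by fun_prop)
      intro x hx
      rw [Set.uIcc_of_le (by linarith)] at hx
      left; intro h; linarith [hx.2]
  have h2 : IntervalIntegrable (fun t => t ^ (u - 1) * (s - t) ^ (v - 1)) volume (s/2) s := by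
    apply IntervalIntegrable.continuousOn_mul
    · have base : IntervalIntegrable (fun t : ℝ => t ^ (v - 1)) volume (s - s/2) (s - s) := by
        apply intervalIntegral.intervalIntegrable_rpow' (by linarith)
      have := base.comp_sub_left s
      simpa using this
    · apply ContinuousOn.rpow_const (by fun_prop)
      intro x hx
      rw [Set.uIcc_of_le (by linarith)] at hx
      left; intro h; rw [h] at hx; linarith [hx.1]
  exact h1.trans h2


lemma simplexEmbed_castSucc {n : ℕ} (y : Fin n → ℝ) (i : Fin n) :
    simplexEmbed n y i.castSucc = y i := by
  simp [simplexEmbed, i.isLt]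

lemma simplexEmbed_last {n : ℕ} (y : Fin n → ℝ) :
    simplexEmbed n y (Fin.last n) = 1 - ∑ j, y j := by
  simp [simplexEmbed]

lemma simplex_cond_iff {n : ℕ} (y : Fin n → ℝ) :
    (∀ i, 0 ≤ simplexEmbed n y i) ↔ (∀ j, 0 ≤ y j) ∧ ∑ j, y j ≤ 1 := by
  constructor
  · intro h
    refine ⟨fun j => by simpa [simplexEmbed_castSucc] using h j.castSucc, ?_⟩
    have := h (Fin.last n)
    rw [simplexEmbed_last] at this
    linarith
  · rintro ⟨h1, h2⟩ i
    rcases Fin.eq_castSucc_or_eq_last i with ⟨j, rfl⟩ | rfl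
    · rw [simplexEmbed_castSucc]; exact h1 j
    · rw [simplexEmbed_last]; linarith

lemma measurable_simplexEmbed_apply {n : ℕ} (i : Fin (n + 1)) :
    Measurable (fun y : Fin n → ℝ => simplexEmbed n y i) := by
  unfold simplexEmbed
  by_cases h : (i : ℕ) < n
  · simpa [h] using measurable_pi_apply (⟨i, h⟩ : Fin n)
  · simp only [h, dite_false]
    exact measurable_const.sub (Finset.measurable_sum _ fun j _ => measurable_pi_apply j)

lemma measurable_simplexEmbed (n : ℕ) : Measurable (simplexEmbed n) :=
  measurable_pi_lambda _ measurable_simplexEmbed_apply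

lemma measurableSet_simplex (n : ℕ) :
    MeasurableSet {y : Fin n → ℝ | ∀ i, 0 ≤ simplexEmbed n y i} := by
  rw [Set.setOf_forall]
  exact MeasurableSet.iInter fun i =>
    measurableSet_le measurable_const (measurable_simplexEmbed_apply i)

lemma sum_hyperplane_null (n : ℕ) :
    (volume : Measure (Fin n → ℝ)) {y | ∑ j, y j = 1} = 0 := by
  cases n with
  | zero =>
      have h : {y : Fin 0 → ℝ | ∑ j, y j = 1} = ∅ := by ext y; simp
      rw [h]
      exact measure_empty
  | succ m =>
      set c : Fin (m+1) → ℝ := fun _ => (1 : ℝ) / (m + 1 : ℝ) with hc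
      have hcsum : ∑ j, c j = 1 := by
        simp [hc, Finset.sum_const]
        field_simp
      set f : (Fin (m+1) → ℝ) →ₗ[ℝ] ℝ :=
        { toFun := fun y => ∑ j, y j
          map_add' := by intro a b; simp [Finset.sum_add_distrib]
          map_smul' := by intro r a; simp [Finset.mul_sum] } with hf
      have hker : LinearMap.ker f ≠ ⊤ := by
        intro h
        have h1 : f c = 0 := by rw [← LinearMap.mem_ker, h]; trivial
        rw [hf] at h1
        simp only [LinearMap.coe_mk, AddHom.coe_mk] at h1
        rw [hcsum] at h1
        norm_num at h1
      have hset : {y : Fin (m+1) → ℝ | ∑ j, y j = 1}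
          = (fun w => -c + w) ⁻¹' (LinearMap.ker f : Set (Fin (m+1) → ℝ)) := by
        ext y
        simp only [Set.mem_preimage, SetLike.mem_coe, LinearMap.mem_ker, hf,
          LinearMap.coe_mk, AddHom.coe_mk, Set.mem_setOf_eq, Pi.add_apply, Pi.neg_apply]
        rw [Finset.sum_add_distrib, Finset.sum_neg_distrib, hcsum]
        constructor
        · intro hy; rw [hy]; ring
        · intro hy; linarith
      rw [hset, measure_preimage_add]
      exact Measure.addHaar_submodule volume _ hker

lemma coord_hyperplane_null {n : ℕ} (i : Fin n) :
    (volume : Measure (Fin n → ℝ)) {y | y i = 0} = 0 := by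
  rw [volume_pi]
  exact Measure.pi_hyperplane _ i 0

noncomputable def sfun {n : ℕ} (β : Fin (n + 1) → ℝ) (y : Fin n → ℝ) : ℝ :=
  if ∀ i, 0 ≤ simplexEmbed n y i then ∏ i, (simplexEmbed n y i) ^ (β i - 1) else 0

lemma sfun_nonneg {n : ℕ} (β : Fin (n + 1) → ℝ) (y : Fin n → ℝ) : 0 ≤ sfun β y := by
  unfold sfun
  split_ifs with h
  · exact Finset.prod_nonneg fun i _ => rpow_nonneg (h i) _
  · exact le_refl 0

lemma measurable_sfun {n : ℕ} (β : Fin (n + 1) → ℝ) : Measurable (sfun β) := by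
  unfold sfun
  exact Measurable.ite (measurableSet_simplex n)
    (Finset.measurable_prod _ fun i _ => by
      have := measurable_simplexEmbed_apply (n := n) i
      fun_prop)
    measurable_const

lemma embed_cons_zero {n : ℕ} (t : ℝ) (z : Fin n → ℝ) :
    simplexEmbed (n + 1) (Fin.cons t z) 0 = t := by
  simp [simplexEmbed]

lemma embed_cons_mid {n : ℕ} (t : ℝ) (z : Fin n → ℝ) (i : Fin n) :
    simplexEmbed (n + 1) (Fin.cons t z) i.succ.castSucc = z i := by
  rw [simplexEmbed_castSucc]
  simp

lemma embed_cons_last {n : ℕ} (t : ℝ) (z : Fin n → ℝ) :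
    simplexEmbed (n + 1) (Fin.cons t z) (Fin.last (n + 1)) = (1 - ∑ j, z j) - t := by
  rw [simplexEmbed_last, Fin.sum_cons]
  ring

lemma cons_cond_iff {n : ℕ} (t : ℝ) (z : Fin n → ℝ) :
    (∀ i, 0 ≤ simplexEmbed (n + 1) (Fin.cons t z) i)
      ↔ (∀ j, 0 ≤ z j) ∧ 0 ≤ t ∧ t ≤ 1 - ∑ j, z j := by
  rw [simplex_cond_iff, Fin.sum_cons, Fin.forall_fin_succ]
  simp only [Fin.cons_zero, Fin.cons_succ]
  constructor
  · rintro ⟨⟨h0, hj⟩, hs⟩; exact ⟨hj, h0, by linarith⟩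
  · rintro ⟨hj, h0, hs⟩; exact ⟨⟨h0, hj⟩, by linarith⟩

lemma cons_prod_eq {n : ℕ} (β : Fin (n + 2) → ℝ) (t : ℝ) (z : Fin n → ℝ) :
    ∏ i, (simplexEmbed (n + 1) (Fin.cons t z) i) ^ (β i - 1)
      = t ^ (β 0 - 1) * (∏ i : Fin n, (z i) ^ (β i.succ.castSucc - 1))
          * ((1 - ∑ j, z j) - t) ^ (β (Fin.last (n + 1)) - 1) := by
  rw [Fin.prod_univ_succ, Fin.prod_univ_castSucc]
  rw [embed_cons_zero]
  have hmid : ∀ i : Fin n,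
      simplexEmbed (n + 1) (Fin.cons t z) (Fin.castSucc i).succ ^ (β (Fin.castSucc i).succ - 1)
        = (z i) ^ (β i.succ.castSucc - 1) := by
    intro i
    rw [Fin.succ_castSucc, embed_cons_mid]
  rw [Finset.prod_congr rfl fun i _ => hmid i, Fin.succ_last, embed_cons_last]
  ring

/-- The reduced parameter vector after integrating out the first coordinate. -/
def redβ {n : ℕ} (β : Fin (n + 2) → ℝ) : Fin (n + 1) → ℝ :=
  Fin.snoc (fun i : Fin n => β i.succ.castSucc) (β 0 + β (Fin.last (n + 1)))

lemma inner_eq {n : ℕ} (β : Fin (n + 2) → ℝ) (hβ : ∀ i, 0 < β i)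
    (z : Fin n → ℝ) (hz : ∑ j, z j ≠ 1) :
    ∫⁻ t : ℝ, ENNReal.ofReal (sfun β (Fin.cons t z))
      = ENNReal.ofReal (Gamma (β 0) * Gamma (β (Fin.last (n + 1)))
            / Gamma (β 0 + β (Fin.last (n + 1))))
          * ENNReal.ofReal (sfun (redβ β) z) := by
  set u := β 0 with hu
  set v := β (Fin.last (n + 1)) with hv
  set s := 1 - ∑ j, z j with hs
  set P := ∏ i : Fin n, (z i) ^ (β i.succ.castSucc - 1) with hP
  by_cases hgood : (∀ j, 0 ≤ z j) ∧ ∑ j, z j ≤ 1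
  · -- good z ; since also `∑ z ≠ 1` we get `0 < s`
    have hspos : 0 < s := by
      rw [hs]
      rcases lt_or_eq_of_le hgood.2 with h | h
      · linarith
      · exact absurd h hz
    have hPnn : 0 ≤ P := Finset.prod_nonneg fun i _ => rpow_nonneg (hgood.1 i) _
    have hsfun : ∀ t : ℝ, sfun β (Fin.cons t z)
        = Set.indicator (Set.Icc 0 s) (fun t => P * (t ^ (u - 1) * (s - t) ^ (v - 1))) t := by
      intro t
      unfold sfun
      rw [cons_prod_eq]
      by_cases ht : t ∈ Set.Icc (0:ℝ) s
      · rw [Set.indicator_of_mem ht, if_pos]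
        · ring
        · exact (cons_cond_iff t z).2 ⟨hgood.1, ht.1, ht.2⟩
      · rw [Set.indicator_of_notMem ht, if_neg]
        intro hc
        obtain ⟨_, h0, h1⟩ := (cons_cond_iff t z).1 hc
        exact ht ⟨h0, h1⟩
    have hred : sfun (redβ β) z = P * s ^ (u + v - 1) := by
      unfold sfun
      rw [if_pos ((simplex_cond_iff z).2 hgood)]
      rw [Fin.prod_univ_castSucc]
      congr 1
      · apply Finset.prod_congr rfl
        intro i _
        rw [simplexEmbed_castSucc]
        congr 2
        rw [redβ, Fin.snoc_castSucc]
      · rw [simplexEmbed_last, redβ, Fin.snoc_last]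
    calc ∫⁻ t : ℝ, ENNReal.ofReal (sfun β (Fin.cons t z))
        = ∫⁻ t : ℝ, Set.indicator (Set.Icc 0 s)
            (fun t => ENNReal.ofReal (P * (t ^ (u - 1) * (s - t) ^ (v - 1)))) t := by
          apply lintegral_congr
          intro t
          rw [hsfun t]
          by_cases ht : t ∈ Set.Icc (0:ℝ) s
          · rw [Set.indicator_of_mem ht, Set.indicator_of_mem ht]
          · rw [Set.indicator_of_notMem ht, Set.indicator_of_notMem ht, ENNReal.ofReal_zero]
      _ = ∫⁻ t in Set.Icc (0:ℝ) s,
            ENNReal.ofReal (P * (t ^ (u - 1) * (s - t) ^ (v - 1))) := by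
          rw [lintegral_indicator measurableSet_Icc]
      _ = ∫⁻ t in Set.Ioc (0:ℝ) s,
            ENNReal.ofReal (P * (t ^ (u - 1) * (s - t) ^ (v - 1))) := by
          rw [Measure.restrict_congr_set Ioc_ae_eq_Icc]
      _ = ENNReal.ofReal P * ∫⁻ t in Set.Ioc (0:ℝ) s,
            ENNReal.ofReal (t ^ (u - 1) * (s - t) ^ (v - 1)) := by
          simp_rw [ENNReal.ofReal_mul hPnn]
          rw [lintegral_const_mul]
          fun_prop
      _ = ENNReal.ofReal P * ENNReal.ofReal (∫ t in Set.Ioc (0:ℝ) s,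
            t ^ (u - 1) * (s - t) ^ (v - 1)) := by
          rw [← ofReal_integral_eq_lintegral_ofReal]
          · exact (beta_integrable (hβ 0) (hβ (Fin.last (n+1))) hspos).1
          · refine (ae_restrict_iff' measurableSet_Ioc).2 (Filter.Eventually.of_forall ?_)
            intro t ht
            exact mul_nonneg (rpow_nonneg ht.1.le _) (rpow_nonneg (by linarith [ht.2]) _)
      _ = ENNReal.ofReal P * ENNReal.ofReal (s ^ (u + v - 1) * (Gamma u * Gamma v / Gamma (u + v))) := by
          rw [← intervalIntegral.integral_of_le hspos.le,
            scaled_beta (hβ 0) (hβ (Fin.last (n+1))) hspos]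
      _ = ENNReal.ofReal (Gamma u * Gamma v / Gamma (u + v)) * ENNReal.ofReal (sfun (redβ β) z) := by
          rw [hred, ← ENNReal.ofReal_mul hPnn, ← ENNReal.ofReal_mul (div_nonneg (mul_nonneg
              (Real.Gamma_pos_of_pos (hβ 0)).le (Real.Gamma_pos_of_pos (hβ (Fin.last (n+1)))).le)
              (Real.Gamma_pos_of_pos (by have := hβ 0; have := hβ (Fin.last (n+1)); linarith)).le)]
          congr 1
          ring
  · -- bad z : both sides vanish
    have h1 : ∀ t : ℝ, sfun β (Fin.cons t z) = 0 := by
      intro t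
      unfold sfun
      rw [if_neg]
      intro hc
      obtain ⟨hj, h0, h1⟩ := (cons_cond_iff t z).1 hc
      exact hgood ⟨hj, by linarith⟩
    have h2 : sfun (redβ β) z = 0 := by
      unfold sfun
      rw [if_neg]
      intro hc
      exact hgood ((simplex_cond_iff z).1 hc)
    simp [h1, h2]

lemma redβ_pos {n : ℕ} {β : Fin (n + 2) → ℝ} (hβ : ∀ i, 0 < β i) :
    ∀ i, 0 < redβ β i := by
  intro i
  rcases Fin.eq_castSucc_or_eq_last i with ⟨j, rfl⟩ | rfl
  · rw [redβ, Fin.snoc_castSucc]; exact hβ _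
  · rw [redβ, Fin.snoc_last]; have := hβ 0; have := hβ (Fin.last (n+1)); linarith

lemma sum_redβ {n : ℕ} (β : Fin (n + 2) → ℝ) : ∑ i, redβ β i = ∑ i, β i := by
  rw [Fin.sum_univ_castSucc, Fin.sum_univ_succ (f := β), Fin.sum_univ_castSucc]
  have h1 : ∀ i : Fin n, redβ β i.castSucc = β i.succ.castSucc := fun i => by
    rw [redβ, Fin.snoc_castSucc]
  have h2 : redβ β (Fin.last n) = β 0 + β (Fin.last (n + 1)) := by
    rw [redβ, Fin.snoc_last]
  rw [Finset.sum_congr rfl fun i _ => h1 i, h2]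
  have h3 : ∀ i : Fin n, β i.castSucc.succ = β i.succ.castSucc := fun i => by
    rw [Fin.succ_castSucc]
  rw [Finset.sum_congr rfl fun i _ => h3 i, Fin.succ_last]
  ring

theorem liouville : ∀ (n : ℕ) (β : Fin (n + 1) → ℝ), (∀ i, 0 < β i) →
    ∫⁻ y : Fin n → ℝ, ENNReal.ofReal (sfun β y)
      = ENNReal.ofReal ((∏ i, Gamma (β i)) / Gamma (∑ i, β i)) := by
  intro n
  induction n with
  | zero =>
      intro β hβ
      have hval : ∀ y : Fin 0 → ℝ, sfun β y = 1 := by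
        intro y
        unfold sfun
        rw [if_pos]
        · rw [Fin.prod_univ_one]
          have h0 : (0 : Fin 1) = Fin.last 0 := rfl
          rw [h0, simplexEmbed_last]
          simp
        · rw [simplex_cond_iff]
          exact ⟨fun j => j.elim0, by simp⟩
      simp only [hval, ENNReal.ofReal_one]
      rw [lintegral_const, one_mul]
      have : (volume : Measure (Fin 0 → ℝ)) Set.univ = 1 := by
        rw [volume_pi, Measure.pi_univ]
        simp
      rw [this, Fin.prod_univ_one, Fin.sum_univ_one,
        div_self (Real.Gamma_pos_of_pos (hβ 0)).ne', ENNReal.ofReal_one]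
  | succ n ih =>
      intro β hβ
      set u := β 0 with hu
      set v := β (Fin.last (n + 1)) with hv
      have huv : 0 < u + v := by have := hβ 0; have := hβ (Fin.last (n+1)); linarith
      -- transfer to the product space
      have mp := (measurePreserving_piFinSuccAbove (fun _ : Fin (n+1) => (volume : Measure ℝ)) 0).symm
      have hmeas : Measurable (fun y : Fin (n+1) → ℝ => ENNReal.ofReal (sfun β y)) :=
        (measurable_sfun β).ennreal_ofReal
      have hcons : Measurable (fun p : ℝ × (Fin n → ℝ) => (Fin.cons p.1 p.2 : Fin (n+1) → ℝ)) := by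
        apply measurable_pi_lambda
        intro i
        refine Fin.cases ?_ ?_ i
        · simpa using measurable_fst
        · intro j
          simpa [Function.comp_def] using (measurable_pi_apply j).comp measurable_snd
      have step1 : ∫⁻ y : Fin (n+1) → ℝ, ENNReal.ofReal (sfun β y) ∂volume
          = ∫⁻ p : ℝ × (Fin n → ℝ), ENNReal.ofReal (sfun β (Fin.cons p.1 p.2))
              ∂((volume : Measure ℝ).prod (volume : Measure (Fin n → ℝ))) := by
        rw [volume_pi, ← mp.lintegral_comp hmeas]
        refine lintegral_congr fun p => ?_
        congr 2
        rw [MeasurableEquiv.piFinSuccAbove_symm_apply]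
        exact Fin.insertNth_zero' p.1 p.2
      rw [step1]
      rw [lintegral_prod_symm (fun p : ℝ × (Fin n → ℝ) => ENNReal.ofReal (sfun β (Fin.cons p.1 p.2)))
        (Measurable.aemeasurable (hmeas.comp hcons))]
      have hae : ∀ᵐ z : Fin n → ℝ, ∑ j, z j ≠ 1 := by
        rw [ae_iff]
        have hset : {z : Fin n → ℝ | ¬ ∑ j, z j ≠ 1} = {z | ∑ j, z j = 1} := by
          ext z; simp
        rw [hset]
        exact sum_hyperplane_null n
      rw [lintegral_congr_ae (hae.mono fun z hz => inner_eq β hβ z hz)]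
      rw [lintegral_const_mul _ (measurable_sfun (redβ β)).ennreal_ofReal]
      rw [ih (redβ β) (redβ_pos hβ)]
      have hBnn : 0 ≤ Gamma u * Gamma v / Gamma (u + v) :=
        div_nonneg (mul_nonneg (Real.Gamma_pos_of_pos (hβ 0)).le
          (Real.Gamma_pos_of_pos (hβ (Fin.last (n+1)))).le)
          (Real.Gamma_pos_of_pos huv).le
      rw [← ENNReal.ofReal_mul hBnn]
      congr 1
      rw [sum_redβ]
      have hprodred : ∏ i, Gamma (redβ β i)
          = (∏ i : Fin n, Gamma (β i.succ.castSucc)) * Gamma (u + v) := by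
        rw [Fin.prod_univ_castSucc]
        congr 1
        · exact Finset.prod_congr rfl fun i _ => by rw [redβ, Fin.snoc_castSucc]
        · rw [redβ, Fin.snoc_last]
      have hprodβ : ∏ i, Gamma (β i)
          = Gamma u * ((∏ i : Fin n, Gamma (β i.succ.castSucc)) * Gamma v) := by
        rw [Fin.prod_univ_succ, Fin.prod_univ_castSucc, Fin.succ_last]
        simp [Fin.succ_castSucc, -Fin.castSucc_succ, hu, hv]
      rw [hprodred, hprodβ]
      have hne : Gamma (u + v) ≠ 0 := (Real.Gamma_pos_of_pos huv).ne'
      rw [div_mul_div_comm]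
      rw [show Gamma u * Gamma v * ((∏ i : Fin n, Gamma (β i.succ.castSucc)) * Gamma (u + v))
            = (Gamma u * ((∏ i : Fin n, Gamma (β i.succ.castSucc)) * Gamma v)) * Gamma (u + v)
          from by ring]
      rw [show Gamma (u + v) * Gamma (∑ i : Fin (n + 2), β i)
            = Gamma (∑ i : Fin (n + 2), β i) * Gamma (u + v) from by ring]
      rw [mul_div_mul_right _ _ hne]


lemma dirichletDensity_eq {n : ℕ} (α : Fin (n + 1) → ℝ) (y : Fin n → ℝ) :
    dirichletDensity α y
      = (Real.Gamma (∑ i, α i) / ∏ i, Real.Gamma (α i)) * sfun α y := by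
  unfold dirichletDensity sfun
  split_ifs <;> simp

lemma embed_pos_of {n : ℕ} {y : Fin n → ℝ} (hS : ∀ i, 0 ≤ simplexEmbed n y i)
    (h0 : ∀ j, y j ≠ 0) (h1 : ∑ j, y j ≠ 1) : ∀ i, 0 < simplexEmbed n y i := by
  intro i
  rcases Fin.eq_castSucc_or_eq_last i with ⟨j, rfl⟩ | rfl
  · rw [simplexEmbed_castSucc]
    have := hS j.castSucc
    rw [simplexEmbed_castSucc] at this
    exact this.lt_of_ne' (h0 j)
  · rw [simplexEmbed_last]
    have := hS (Fin.last n)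
    rw [simplexEmbed_last] at this
    rcases this.lt_or_eq with h | h
    · exact h
    · exact absurd (by linarith : ∑ j, y j = 1) h1


/-- Mixed moments of the Dirichlet distribution: for `X ~ Dir(α)` and nonnegative
integers `k₁,…,k_N`,
`E[∏ᵢ Xᵢ^{kᵢ}] = (Γ(‖α‖₁)/Γ(‖α‖₁+‖k‖₁)) ∏ᵢ Γ(αᵢ+kᵢ)/Γ(αᵢ)`. -/
theorem stmt6 {n : ℕ} (α : Fin (n + 1) → ℝ) (hα : ∀ i, 0 < α i)
    (k : Fin (n + 1) → ℕ) :
    ∫ x, ∏ i, (x i) ^ (k i) ∂(dirichlet α)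
      = Real.Gamma (∑ i, α i) / Real.Gamma ((∑ i, α i) + ∑ i, (k i : ℝ)) *
          ∏ i, Real.Gamma (α i + k i) / Real.Gamma (α i) := by
  classical
  set β : Fin (n + 1) → ℝ := fun i => α i + (k i : ℝ) with hβ
  have hβpos : ∀ i, 0 < β i := fun i => by
    have := hα i
    have : (0:ℝ) ≤ (k i : ℝ) := Nat.cast_nonneg _
    simp only [hβ]
    have := hα i
    linarith
  set C : ℝ := Real.Gamma (∑ i, α i) / ∏ i, Real.Gamma (α i) with hC
  have hGmeas : Measurable (fun x : Fin (n+1) → ℝ => ∏ i, (x i) ^ (k i)) :=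
    Finset.measurable_prod _ fun i _ => (measurable_pi_apply i).pow_const _
  have hdd : dirichletDensity α = fun y => C * sfun α y :=
    funext fun y => dirichletDensity_eq α y
  have hρmeas : Measurable (dirichletDensity α) := by
    rw [hdd]
    exact (measurable_sfun α).const_mul C
  have hρnn : ∀ y, 0 ≤ dirichletDensity α y := by
    intro y
    rw [dirichletDensity_eq]
    refine mul_nonneg ?_ (sfun_nonneg α y)
    refine div_nonneg (Real.Gamma_pos_of_pos ?_).le
      (Finset.prod_nonneg fun i _ => (Real.Gamma_pos_of_pos (hα i)).le)
    exact Finset.sum_pos (fun i _ => hα i) Finset.univ_nonempty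
  rw [dirichlet, integral_map (measurable_simplexEmbed n).aemeasurable
    hGmeas.aestronglyMeasurable]
  have hwd : (fun y : Fin n → ℝ => ENNReal.ofReal (dirichletDensity α y))
      = (fun y => ((dirichletDensity α y).toNNReal : ℝ≥0∞)) := rfl
  rw [hwd, integral_withDensity_eq_integral_smul (hρmeas.real_toNNReal)]
  have hae : ∀ᵐ y : Fin n → ℝ, (∀ j, y j ≠ 0) ∧ ∑ j, y j ≠ 1 := by
    have h1 : ∀ᵐ y : Fin n → ℝ, ∀ j, y j ≠ 0 := by
      rw [ae_all_iff]
      intro j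
      rw [ae_iff]
      have : {y : Fin n → ℝ | ¬ y j ≠ 0} = {y | y j = 0} := by ext y; simp
      rw [this]
      exact coord_hyperplane_null j
    have h2 : ∀ᵐ y : Fin n → ℝ, ∑ j, y j ≠ 1 := by
      rw [ae_iff]
      have : {y : Fin n → ℝ | ¬ ∑ j, y j ≠ 1} = {y | ∑ j, y j = 1} := by ext y; simp
      rw [this]
      exact sum_hyperplane_null n
    exact h1.and h2
  have hptwise : ∀ᵐ y : Fin n → ℝ,
      (dirichletDensity α y).toNNReal • (∏ i, (simplexEmbed n y i) ^ (k i))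
        = C * sfun β y := by
    filter_upwards [hae] with y hy
    rw [NNReal.smul_def, Real.coe_toNNReal _ (hρnn y), dirichletDensity_eq, smul_eq_mul, mul_assoc]
    congr 1
    unfold sfun
    by_cases hS : ∀ i, 0 ≤ simplexEmbed n y i
    · rw [if_pos hS, if_pos hS, ← Finset.prod_mul_distrib]
      apply Finset.prod_congr rfl
      intro i _
      have hpos : 0 < simplexEmbed n y i := embed_pos_of hS hy.1 hy.2 i
      rw [← Real.rpow_natCast (simplexEmbed n y i) (k i), ← Real.rpow_add hpos]
      congr 1
      simp only [hβ]
      ring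
    · rw [if_neg hS, if_neg hS, zero_mul]
  rw [integral_congr_ae hptwise, integral_const_mul]
  rw [integral_eq_lintegral_of_nonneg_ae (Filter.Eventually.of_forall (sfun_nonneg β))
    (measurable_sfun β).aestronglyMeasurable]
  rw [liouville n β hβpos, ENNReal.toReal_ofReal
    (div_nonneg (Finset.prod_nonneg fun i _ => (Real.Gamma_pos_of_pos (hβpos i)).le)
      (Real.Gamma_pos_of_pos (Finset.sum_pos (fun i _ => hβpos i) Finset.univ_nonempty)).le)]
  have hsum : ∑ i, β i = (∑ i, α i) + ∑ i, (k i : ℝ) := by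
    simp only [hβ]
    rw [Finset.sum_add_distrib]
  rw [hsum, hC]
  rw [Finset.prod_div_distrib]
  simp only [hβ]
  ring

end
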